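/- Let n ≥ 1 and let x₁ ≤ x₂ ≤ ⋯ ≤ x_{3n} be a nondecreasing 3n-tuple of real numbers. For every partition of the index set {1, …, 3n} into n pairwise disjoint 3-element subsets S₁, …, S_n, the partition into consecutive triples minimizes the sum of squared distances: ∑_{m=1}^{n} S(x_{3m−2}, x_{3m−1}, x_{3m}) ≤ ∑_{m=1}^{n} S(x_{S_m}), where S(x_S) denotes the squared distance within the triple of values indexed by S. -/

import Mathlib

set_option maxHeartbeats 1000000
open Finset

lemma sum_sq_le_sq_sum' {α : Type*} {s : Finset α} {f : α → ℝ} (h : ∀ a ∈ s, 0 ≤ f a) :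
    ∑ a ∈ s, (f a)^2 ≤ (∑ a ∈ s, f a)^2 := by
  induction s using Finset.cons_induction with
  | empty => simp
  | cons a s ha ih =>
      simp only [Finset.sum_cons]
      have h1 : 0 ≤ f a := h a (Finset.mem_cons_self _ _)
      have h2 : 0 ≤ ∑ b ∈ s, f b :=
        Finset.sum_nonneg (fun b hb => h b (Finset.mem_cons_of_mem hb))
      have h3 := ih (fun b hb => h b (Finset.mem_cons_of_mem hb))
      nlinarith

lemma exists_ordered_triple {α : Type*} [DecidableEq α] [LinearOrder α] {s : Finset α} (h : s.card = 3) :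
    ∃ a b c, a < b ∧ b < c ∧ s = {a, b, c} := by
  rw [Finset.card_eq_three] at h
  obtain ⟨a, b, c, hab, hac, hbc, rfl⟩ := h
  rcases lt_trichotomy a b with h1 | h1 | h1
  · rcases lt_trichotomy b c with h2 | h2 | h2
    · exact ⟨a, b, c, h1, h2, rfl⟩
    · exact absurd h2 hbc
    · rcases lt_trichotomy a c with h3 | h3 | h3
      · exact ⟨a, c, b, h3, h2, by ext t; simp [Finset.ext_iff]; tauto⟩
      · exact absurd h3 hac
      · exact ⟨c, a, b, h3, h1, by ext t; simp [Finset.ext_iff]; tauto⟩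
  · exact absurd h1 hab
  · rcases lt_trichotomy a c with h2 | h2 | h2
    · exact ⟨b, a, c, h1, h2, by ext t; simp [Finset.ext_iff]; tauto⟩
    · exact absurd h2 hac
    · rcases lt_trichotomy b c with h3 | h3 | h3
      · exact ⟨b, c, a, h3, h2, by ext t; simp [Finset.ext_iff]; tauto⟩
      · exact absurd h3 hbc
      · exact ⟨c, b, a, h3, h1, by ext t; simp [Finset.ext_iff]; tauto⟩

lemma triple_pair_sum {N : ℕ} (f : Fin N → Fin N → ℝ) {a b c : Fin N}
    (hab : a < b) (hbc : b < c) :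
    ∑ i ∈ ({a,b,c} : Finset (Fin N)),
      ∑ j ∈ ({a,b,c} : Finset (Fin N)).filter (fun j => i < j), f i j
      = f a b + f a c + f b c := by
  have hac : a < c := hab.trans hbc
  have h1 : ({a,b,c} : Finset (Fin N)).filter (fun j => a < j) = {b, c} := by
    ext t; simp; constructor
    · rintro ⟨h | h | h, ht⟩ <;> simp_all [lt_irrefl]
    · rintro (rfl | rfl) <;> simp_all
  have h2 : ({a,b,c} : Finset (Fin N)).filter (fun j => b < j) = {c} := by
    ext t; simp; constructor
    · rintro ⟨h | h | h, ht⟩ <;> simp_all [lt_irrefl] <;>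
        exact absurd (ht.trans hab) (lt_irrefl _)
    · rintro rfl; simp_all
  have h3 : ({a,b,c} : Finset (Fin N)).filter (fun j => c < j) = ∅ := by
    ext t; simp; rintro (rfl | rfl | rfl)
    · exact hac.le
    · exact hbc.le
    · exact le_rfl
  have hna : a ∉ ({b,c} : Finset (Fin N)) := by simp [hab.ne, hac.ne]
  have hnb : b ∉ ({c} : Finset (Fin N)) := by simp [hbc.ne]
  rw [Finset.sum_insert hna, Finset.sum_insert hnb, Finset.sum_singleton, h1, h2, h3,
    Finset.sum_pair hbc.ne, Finset.sum_singleton, Finset.sum_empty]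
  ring

def clIdx (n : ℕ) (m : Fin n) (t : Fin (3*n)) : Fin (3*n) :=
  ⟨min (max t.val (3*m.val)) (3*m.val+2), by have := m.isLt; omega⟩

def gap (n : ℕ) (x : Fin (3*n) → ℝ) (k : ℕ) : ℝ :=
  if h : k + 1 < 3*n then x ⟨k+1, h⟩ - x ⟨k, by omega⟩ else 0

lemma gap_nonneg {n : ℕ} {x : Fin (3*n) → ℝ} (hx : Monotone x) (k : ℕ) :
    0 ≤ gap n x k := by
  unfold gap
  split
  · exact sub_nonneg.2 (hx (by simp [Fin.le_def]))
  · exact le_refl 0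

lemma tele {n : ℕ} (x : Fin (3*n) → ℝ) :
    ∀ (b : ℕ) (hb : b < 3*n) (i : Fin (3*n)), i.val ≤ b →
      x ⟨b, hb⟩ - x i = ∑ k ∈ Finset.Ico i.val b, gap n x k := by
  intro b
  induction b with
  | zero =>
      intro hb i hi
      have : i = ⟨0, hb⟩ := Fin.ext (by simp only [Fin.val_mk]; omega)
      simp [this]
  | succ b ih =>
      intro hb i hi
      have hb' : b < 3*n := by omega
      rcases Nat.eq_or_lt_of_le hi with h | h
      · have : i = ⟨b+1, hb⟩ := Fin.ext (by simp only [Fin.val_mk]; omega)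
        simp [this]
      · have hi' : i.val ≤ b := by omega
        rw [Finset.sum_Ico_succ_top hi', ← ih hb' i hi']
        have : gap n x b = x ⟨b+1, hb⟩ - x ⟨b, hb'⟩ := by
          unfold gap; rw [dif_pos hb]
        rw [this]; ring

lemma cl_mono {n : ℕ} (m : Fin n) {i j : Fin (3*n)} (hij : i ≤ j) :
    clIdx n m i ≤ clIdx n m j := by
  have : i.val ≤ j.val := hij
  simp only [clIdx, Fin.le_def, Fin.val_mk]
  omega

lemma pair_bound {n : ℕ} (x : Fin (3*n) → ℝ) (hx : Monotone x)
    {i j : Fin (3*n)} (hij : i ≤ j) :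
    ∑ m : Fin n, (x (clIdx n m j) - x (clIdx n m i))^2 ≤ (x j - x i)^2 := by
  have hnn : ∀ m : Fin n, 0 ≤ x (clIdx n m j) - x (clIdx n m i) :=
    fun m => sub_nonneg.2 (hx (cl_mono m hij))
  have hval : ∀ (m : Fin n) (t : Fin (3*n)),
      (clIdx n m t).val = min (max t.val (3*m.val)) (3*m.val+2) := fun m t => rfl
  have hij' : i.val ≤ j.val := hij
  have hmem : ∀ (m : Fin n) (k : ℕ), k ∈ Finset.Ico (clIdx n m i).val (clIdx n m j).val →
      3*m.val ≤ k ∧ k < 3*m.val + 2 ∧ i.val ≤ k ∧ k < j.val := by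
    intro m k hk
    rw [Finset.mem_Ico] at hk
    rw [hval m i, hval m j] at hk
    omega
  have hsum : ∑ m : Fin n, (x (clIdx n m j) - x (clIdx n m i)) ≤ x j - x i := by
    have hterm : ∀ m : Fin n, x (clIdx n m j) - x (clIdx n m i)
        = ∑ k ∈ Finset.Ico (clIdx n m i).val (clIdx n m j).val, gap n x k := by
      intro m
      have := tele x (clIdx n m j).val (clIdx n m j).isLt (clIdx n m i) (cl_mono m hij)
      simpa using this
    have hdisj : (↑(Finset.univ : Finset (Fin n)) : Set (Fin n)).PairwiseDisjoint
        (fun m : Fin n => Finset.Ico (clIdx n m i).val (clIdx n m j).val) := by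
      intro a _ b _ hab
      simp only [Function.onFun]
      rw [Finset.disjoint_left]
      intro k hk1 hk2
      have h1 := hmem a k hk1
      have h2 := hmem b k hk2
      have : a.val ≠ b.val := fun h => hab (Fin.ext h)
      omega
    calc ∑ m : Fin n, (x (clIdx n m j) - x (clIdx n m i))
        = ∑ m : Fin n, ∑ k ∈ Finset.Ico (clIdx n m i).val (clIdx n m j).val, gap n x k :=
          Finset.sum_congr rfl (fun m _ => hterm m)
      _ = ∑ k ∈ Finset.univ.biUnion
            (fun m : Fin n => Finset.Ico (clIdx n m i).val (clIdx n m j).val), gap n x k :=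
          (Finset.sum_biUnion hdisj).symm
      _ ≤ ∑ k ∈ Finset.Ico i.val j.val, gap n x k := by
          apply Finset.sum_le_sum_of_subset_of_nonneg
          · intro k hk
            rw [Finset.mem_biUnion] at hk
            obtain ⟨m, _, hk⟩ := hk
            have := hmem m k hk
            rw [Finset.mem_Ico]
            omega
          · intro k _ _
            exact gap_nonneg hx k
      _ = x j - x i := by
          have := tele x j.val j.isLt i hij'
          simpa using this.symm
  calc ∑ m : Fin n, (x (clIdx n m j) - x (clIdx n m i))^2
      ≤ (∑ m : Fin n, (x (clIdx n m j) - x (clIdx n m i)))^2 :=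
        sum_sq_le_sq_sum' (fun m _ => hnn m)
    _ ≤ (x j - x i)^2 := by
        apply pow_le_pow_left₀ (Finset.sum_nonneg (fun m _ => hnn m)) hsum

def blockSum (n : ℕ) (x : Fin (3*n) → ℝ) (S : Fin n → Finset (Fin (3*n)))
    (m : Fin n) (a : Fin n) : ℝ :=
  ∑ i ∈ S a, ∑ j ∈ (S a).filter (fun j => i < j), (x (clIdx n m j) - x (clIdx n m i))^2

lemma blockSum_nonneg {n : ℕ} (x : Fin (3*n) → ℝ) (S : Fin n → Finset (Fin (3*n)))
    (m a : Fin n) : 0 ≤ blockSum n x S m a :=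
  Finset.sum_nonneg fun _ _ => Finset.sum_nonneg fun _ _ => sq_nonneg _

lemma blockSum_eq {n : ℕ} (x : Fin (3*n) → ℝ) (S : Fin n → Finset (Fin (3*n))) (m a : Fin n)
    {u v w : Fin (3*n)} (huv : u < v) (hvw : v < w) (hset : S a = {u,v,w}) :
    blockSum n x S m a = (x (clIdx n m v) - x (clIdx n m u))^2
      + (x (clIdx n m w) - x (clIdx n m u))^2 + (x (clIdx n m w) - x (clIdx n m v))^2 := by
  unfold blockSum
  rw [hset]
  exact triple_pair_sum _ huv hvw

lemma block_bound {n : ℕ} (x : Fin (3*n) → ℝ) (hx : Monotone x)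
    (S : Fin n → Finset (Fin (3*n))) (hcard : ∀ a, (S a).card = 3)
    (hdisj : Pairwise fun a b => Disjoint (S a) (S b))
    (hcover : ∀ p : Fin (3*n), ∃ a, p ∈ S a) (m : Fin n)
    (hA : 3*m.val < 3*n) (hB : 3*m.val+1 < 3*n) (hC : 3*m.val+2 < 3*n) :
    (x ⟨3*m.val+1, hB⟩ - x ⟨3*m.val, hA⟩)^2 + (x ⟨3*m.val+2, hC⟩ - x ⟨3*m.val+1, hB⟩)^2
      + (x ⟨3*m.val+2, hC⟩ - x ⟨3*m.val, hA⟩)^2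
      ≤ ∑ a : Fin n, blockSum n x S m a := by
  have hclA : ∀ t : Fin (3*n), t.val ≤ 3*m.val → clIdx n m t = ⟨3*m.val, hA⟩ := by
    intro t ht; apply Fin.ext; simp only [clIdx, Fin.val_mk]; omega
  have hclB : ∀ t : Fin (3*n), t.val = 3*m.val+1 → clIdx n m t = ⟨3*m.val+1, hB⟩ := by
    intro t ht; apply Fin.ext; simp only [clIdx, Fin.val_mk]; omega
  have hclC : ∀ t : Fin (3*n), 3*m.val+2 ≤ t.val → clIdx n m t = ⟨3*m.val+2, hC⟩ := by
    intro t ht; apply Fin.ext; simp only [clIdx, Fin.val_mk]; omega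
  have hAB : x ⟨3*m.val, hA⟩ ≤ x ⟨3*m.val+1, hB⟩ := hx (by simp [Fin.le_def])
  have hBC : x ⟨3*m.val+1, hB⟩ ≤ x ⟨3*m.val+2, hC⟩ := hx (by simp [Fin.le_def])
  -- the counting function
  set cnt : Fin n → ℕ := fun a => ((S a).filter (fun t => t.val ≤ 3*m.val)).card with hcnt
  have hsumcnt : ∑ a : Fin n, cnt a = 3*m.val + 1 := by
    have hd : ∀ a ∈ (Finset.univ : Finset (Fin n)), ∀ b ∈ (Finset.univ : Finset (Fin n)),
        a ≠ b → Disjoint ((S a).filter (fun t => t.val ≤ 3*m.val))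
          ((S b).filter (fun t => t.val ≤ 3*m.val)) := by
      intro a _ b _ hab
      exact (hdisj hab).mono (Finset.filter_subset _ _) (Finset.filter_subset _ _)
    have h1 : Finset.univ.biUnion (fun a => (S a).filter (fun t => t.val ≤ 3*m.val))
        = Finset.univ.filter (fun t : Fin (3*n) => t.val ≤ 3*m.val) := by
      ext t
      simp only [Finset.mem_biUnion, Finset.mem_filter, Finset.mem_univ, true_and]
      constructor
      · rintro ⟨a, _, ht⟩; exact ht
      · intro ht; obtain ⟨a, ha⟩ := hcover t; exact ⟨a, ha, ht⟩
    have h2 : Finset.univ.filter (fun t : Fin (3*n) => t.val ≤ 3*m.val)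
        = Finset.Iic (⟨3*m.val, hA⟩ : Fin (3*n)) := by
      ext t; simp [Fin.le_def]
    have hcb := Finset.card_biUnion hd
    rw [h1, h2, Fin.card_Iic] at hcb
    exact hcb.symm
  -- existence of a mixed triple
  have hmix : ∀ a0 : Fin n, cnt a0 % 3 ≠ 1 →
      ∃ a1, a1 ≠ a0 ∧ 0 < cnt a1 ∧ cnt a1 < 3 := by
    intro a0 h0
    by_contra hc
    push_neg at hc
    have h3 : ∀ a, a ≠ a0 → cnt a % 3 = 0 := by
      intro a ha
      have hle : cnt a ≤ 3 := le_trans (Finset.card_filter_le _ _) (hcard a).le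
      rcases Nat.eq_zero_or_pos (cnt a) with h | h
      · omega
      · have := hc a ha h; omega
    have hdvd : 3 ∣ ∑ a ∈ Finset.univ.erase a0, cnt a :=
      Finset.dvd_sum fun a ha => Nat.dvd_of_mod_eq_zero (h3 a (Finset.ne_of_mem_erase ha))
    have hsplit : cnt a0 + ∑ a ∈ Finset.univ.erase a0, cnt a = 3*m.val + 1 := by
      rw [Finset.add_sum_erase _ _ (Finset.mem_univ a0)]; exact hsumcnt
    omega
  -- contribution of a mixed triple
  have hmixg : ∀ a1 : Fin n, (⟨3*m.val+1, hB⟩ : Fin (3*n)) ∉ S a1 → 0 < cnt a1 → cnt a1 < 3 →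
      2 * (x ⟨3*m.val+2, hC⟩ - x ⟨3*m.val, hA⟩)^2 ≤ blockSum n x S m a1 := by
    intro a1 hnotB h1 h2
    obtain ⟨i, hi⟩ := Finset.card_pos.mp h1
    rw [Finset.mem_filter] at hi
    have hjex : ∃ j ∈ S a1, ¬ j.val ≤ 3*m.val := by
      by_contra hcj
      push_neg at hcj
      have : (S a1).filter (fun t => t.val ≤ 3*m.val) = S a1 :=
        Finset.filter_true_of_mem hcj
      rw [hcnt] at h2
      simp only [this, hcard a1] at h2
      omega
    obtain ⟨j, hjS, hj⟩ := hjex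
    have hjne : j.val ≠ 3*m.val + 1 := by
      intro h
      exact hnotB (by rwa [show (⟨3*m.val+1, hB⟩ : Fin (3*n)) = j from (Fin.ext h.symm)])
    obtain ⟨u, v, w, huv, hvw, hS1⟩ := exists_ordered_triple (hcard a1)
    have hu : u.val ≤ 3*m.val := by
      have : u ≤ i := by
        rw [hS1] at hi
        rcases Finset.mem_insert.mp hi.1 with h | h
        · exact h ▸ le_refl u
        · rcases Finset.mem_insert.mp h with h | h
          · exact h ▸ huv.le
          · rw [Finset.mem_singleton] at h; exact h ▸ (huv.trans hvw).le
      exact le_trans this hi.2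
    have hw : 3*m.val + 2 ≤ w.val := by
      have hjw : j ≤ w := by
        rw [hS1] at hjS
        rcases Finset.mem_insert.mp hjS with h | h
        · exact h ▸ (huv.trans hvw).le
        · rcases Finset.mem_insert.mp h with h | h
          · exact h ▸ hvw.le
          · rw [Finset.mem_singleton] at h; exact h ▸ le_refl w
      have : j.val ≤ w.val := hjw
      omega
    have hvne : v.val ≠ 3*m.val + 1 := by
      intro h
      have hvmem : v ∈ S a1 := by rw [hS1]; simp
      exact hnotB (by rwa [show (⟨3*m.val+1, hB⟩ : Fin (3*n)) = v from (Fin.ext h.symm)])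
    rw [blockSum_eq x S m a1 huv hvw hS1, hclA u hu, hclC w hw]
    rcases Nat.lt_or_ge v.val (3*m.val+1) with hv | hv
    · rw [hclA v (by omega)]
      have h0 : (x (⟨3*m.val, hA⟩ : Fin (3*n)) - x ⟨3*m.val, hA⟩)^2 = 0 := by simp
      nlinarith [sq_nonneg (x (⟨3*m.val+2, hC⟩ : Fin (3*n)) - x ⟨3*m.val, hA⟩)]
    · rw [hclC v (by omega)]
      nlinarith [sq_nonneg (x (⟨3*m.val+2, hC⟩ : Fin (3*n)) - x ⟨3*m.val+2, hC⟩)]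
  -- main case analysis on the triple containing the middle index
  obtain ⟨a0, ha0⟩ := hcover ⟨3*m.val+1, hB⟩
  obtain ⟨p, q, r, hpq, hqr, hS0⟩ := exists_ordered_triple (hcard a0)
  have hmem0 : (⟨3*m.val+1, hB⟩ : Fin (3*n)) ∈ ({p, q, r} : Finset (Fin (3*n))) := by
    rw [← hS0]; exact ha0
  have hbs0 := blockSum_eq x S m a0 hpq hqr hS0
  simp only [Finset.mem_insert, Finset.mem_singleton] at hmem0
  have hnotmem : ∀ a1, a1 ≠ a0 → (⟨3*m.val+1, hB⟩ : Fin (3*n)) ∉ S a1 := by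
    intro a1 hne hmem
    exact (Finset.disjoint_left.mp (hdisj hne) hmem) ha0
  rcases hmem0 with hBp | hBq | hBr
  · -- middle index is the smallest of its triple: q, r ≥ 3m+2
    have hq : 3*m.val + 2 ≤ q.val := by
      have : p.val < q.val := hpq
      rw [← hBp] at this; simp at this; omega
    have hr : 3*m.val + 2 ≤ r.val := by
      have h1 : q.val < r.val := hqr
      omega
    have hcnt0 : cnt a0 = 0 := by
      show ((S a0).filter (fun t => t.val ≤ 3*m.val)).card = 0
      rw [hS0, Finset.card_eq_zero, Finset.filter_eq_empty_iff]
      intro t ht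
      simp only [Finset.mem_insert, Finset.mem_singleton] at ht
      have hpv : p.val = 3*m.val+1 := by rw [← hBp]
      rcases ht with rfl | rfl | rfl <;> omega
    obtain ⟨a1, hne, h1, h2⟩ := hmix a0 (by omega)
    have hmg := hmixg a1 (hnotmem a1 hne) h1 h2
    have hpair : blockSum n x S m a0 + blockSum n x S m a1 ≤ ∑ a : Fin n, blockSum n x S m a := by
      have hsub := Finset.sum_le_sum_of_subset_of_nonneg
        (Finset.subset_univ ({a0, a1} : Finset (Fin n)))
        (fun a _ _ => blockSum_nonneg x S m a)
      rwa [Finset.sum_pair (Ne.symm hne)] at hsub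
    rw [hbs0, ← hBp, hclB ⟨3*m.val+1, hB⟩ rfl, hclC q hq, hclC r hr] at hpair
    nlinarith [sq_nonneg (x (⟨3*m.val+2, hC⟩ : Fin (3*n)) - x ⟨3*m.val+2, hC⟩),
      mul_nonneg (sub_nonneg.2 hAB) (sub_nonneg.2 hBC), sq_nonneg (x (⟨3*m.val+1, hB⟩ : Fin (3*n)) - x ⟨3*m.val, hA⟩)]
  · -- middle index is the middle of its triple: exact case
    have hp : p.val ≤ 3*m.val := by
      have : p.val < q.val := hpq
      rw [← hBq] at this; simp at this; omega
    have hr : 3*m.val + 2 ≤ r.val := by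
      have : q.val < r.val := hqr
      rw [← hBq] at this; simp at this; omega
    have hle : blockSum n x S m a0 ≤ ∑ a : Fin n, blockSum n x S m a :=
      Finset.single_le_sum (fun a _ => blockSum_nonneg x S m a) (Finset.mem_univ a0)
    rw [hbs0, ← hBq, hclB ⟨3*m.val+1, hB⟩ rfl, hclA p hp, hclC r hr] at hle
    linarith
  · -- middle index is the largest of its triple: p, q ≤ 3m
    have hq : q.val ≤ 3*m.val := by
      have : q.val < r.val := hqr
      rw [← hBr] at this; simp at this; omega
    have hp : p.val ≤ 3*m.val := by
      have : p.val < q.val := hpq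
      omega
    have hcnt0 : cnt a0 = 2 := by
      show ((S a0).filter (fun t => t.val ≤ 3*m.val)).card = 2
      have : (S a0).filter (fun t => t.val ≤ 3*m.val) = {p, q} := by
        rw [hS0]
        ext t
        simp only [Finset.mem_filter, Finset.mem_insert, Finset.mem_singleton]
        constructor
        · rintro ⟨rfl | rfl | h, ht⟩
          · exact Or.inl rfl
          · exact Or.inr rfl
          · subst h
            have hrv : t.val = 3*m.val+1 := by rw [← hBr]
            exact absurd ht (by omega)
        · rintro (rfl | rfl)
          · exact ⟨Or.inl rfl, hp⟩
          · exact ⟨Or.inr (Or.inl rfl), hq⟩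
      rw [this, Finset.card_insert_of_notMem (by simp [hpq.ne]), Finset.card_singleton]
    obtain ⟨a1, hne, h1, h2⟩ := hmix a0 (by omega)
    have hmg := hmixg a1 (hnotmem a1 hne) h1 h2
    have hpair : blockSum n x S m a0 + blockSum n x S m a1 ≤ ∑ a : Fin n, blockSum n x S m a := by
      have hsub := Finset.sum_le_sum_of_subset_of_nonneg
        (Finset.subset_univ ({a0, a1} : Finset (Fin n)))
        (fun a _ _ => blockSum_nonneg x S m a)
      rwa [Finset.sum_pair (Ne.symm hne)] at hsub
    rw [hbs0, ← hBr, hclB ⟨3*m.val+1, hB⟩ rfl, hclA p hp, hclA q hq] at hpair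
    nlinarith [sq_nonneg (x (⟨3*m.val, hA⟩ : Fin (3*n)) - x ⟨3*m.val, hA⟩),
      mul_nonneg (sub_nonneg.2 hAB) (sub_nonneg.2 hBC), sq_nonneg (x (⟨3*m.val+2, hC⟩ : Fin (3*n)) - x ⟨3*m.val+1, hB⟩)]

/-- The squared distance within the tuple of values indexed by a finite index
set `S`: the sum of `(x j - x i)²` over all pairs `i < j` in `S`. -/
def sqDistWithin {m : ℕ} (x : Fin m → ℝ) (S : Finset (Fin m)) : ℝ :=
  ∑ i ∈ S, ∑ j ∈ S.filter (fun j => i < j), (x j - x i) ^ 2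

/-- For a sorted `3n`-tuple, the partition into consecutive triples minimizes
the total squared distance within, over all partitions of the `3n` indices
into `n` pairwise disjoint 3-element subsets. -/
theorem consecutive_triples_min_sq (n : ℕ) (hn : 1 ≤ n) (x : Fin (3 * n) → ℝ)
    (hx : Monotone x) (S : Fin n → Finset (Fin (3 * n)))
    (hcard : ∀ m, (S m).card = 3)
    (hdisj : Pairwise fun a b => Disjoint (S a) (S b))
    (hcover : ∀ p : Fin (3 * n), ∃ m, p ∈ S m) :
    ∑ m : Fin n,
        ((x ⟨3 * (m : ℕ) + 1, by have := m.isLt; omega⟩ -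
            x ⟨3 * (m : ℕ), by have := m.isLt; omega⟩) ^ 2 +
          (x ⟨3 * (m : ℕ) + 2, by have := m.isLt; omega⟩ -
            x ⟨3 * (m : ℕ) + 1, by have := m.isLt; omega⟩) ^ 2 +
          (x ⟨3 * (m : ℕ) + 2, by have := m.isLt; omega⟩ -
            x ⟨3 * (m : ℕ), by have := m.isLt; omega⟩) ^ 2) ≤
      ∑ m : Fin n, sqDistWithin x (S m) := by
  have step3 : ∀ a : Fin n, ∑ m : Fin n, blockSum n x S m a ≤ sqDistWithin x (S a) := by
    intro a
    simp only [blockSum, sqDistWithin]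
    calc ∑ m : Fin n, ∑ i ∈ S a, ∑ j ∈ (S a).filter (fun j => i < j),
            (x (clIdx n m j) - x (clIdx n m i))^2
        = ∑ i ∈ S a, ∑ m : Fin n, ∑ j ∈ (S a).filter (fun j => i < j),
            (x (clIdx n m j) - x (clIdx n m i))^2 := Finset.sum_comm
      _ = ∑ i ∈ S a, ∑ j ∈ (S a).filter (fun j => i < j), ∑ m : Fin n,
            (x (clIdx n m j) - x (clIdx n m i))^2 :=
          Finset.sum_congr rfl fun i _ => Finset.sum_comm
      _ ≤ ∑ i ∈ S a, ∑ j ∈ (S a).filter (fun j => i < j), (x j - x i)^2 := by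
          apply Finset.sum_le_sum; intro i _
          apply Finset.sum_le_sum; intro j hj
          exact pair_bound x hx (le_of_lt (Finset.mem_filter.mp hj).2)
  calc ∑ m : Fin n,
        ((x ⟨3 * (m : ℕ) + 1, by have := m.isLt; omega⟩ -
            x ⟨3 * (m : ℕ), by have := m.isLt; omega⟩) ^ 2 +
          (x ⟨3 * (m : ℕ) + 2, by have := m.isLt; omega⟩ -
            x ⟨3 * (m : ℕ) + 1, by have := m.isLt; omega⟩) ^ 2 +
          (x ⟨3 * (m : ℕ) + 2, by have := m.isLt; omega⟩ -
            x ⟨3 * (m : ℕ), by have := m.isLt; omega⟩) ^ 2)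
      ≤ ∑ m : Fin n, ∑ a : Fin n, blockSum n x S m a := by
        apply Finset.sum_le_sum
        intro m _
        exact block_bound x hx S hcard hdisj hcover m
          (by have := m.isLt; omega) (by have := m.isLt; omega) (by have := m.isLt; omega)
    _ = ∑ a : Fin n, ∑ m : Fin n, blockSum n x S m a := Finset.sum_comm
    _ ≤ ∑ a : Fin n, sqDistWithin x (S a) := Finset.sum_le_sum fun a _ => step3 a
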